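/- Let Φ ∈ ℝ^{m×N} satisfy the Restricted Isometry Property with constant δ_k for sparsity k. Let Γ, Γ' ⊆ {1,…,N} be disjoint sets with |Γ ∪ Γ'| ≤ k, and let u ∈ ℝ^Γ. Then ‖Φ_{Γ'}* Φ_Γ u‖₂ ≤ δ_k ‖u‖₂. -/

import Mathlib

open scoped BigOperators
open Matrix

/-- The Euclidean (ℓ²) norm of a finitely-indexed real vector. -/
noncomputable def l2 {ι : Type*} [Fintype ι] (x : ι → ℝ) : ℝ :=
  Real.sqrt (∑ i, x i ^ 2)

/-- The supremum (ℓ∞) norm of a finitely-indexed real vector. -/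
noncomputable def linf {ι : Type*} [Fintype ι] (x : ι → ℝ) : ℝ :=
  ⨆ i, |x i|

/-- The Euclidean inner product. -/
def dot {ι : Type*} [Fintype ι] (x y : ι → ℝ) : ℝ := ∑ i, x i * y i

/-- A vector is `k`-sparse if it has at most `k` nonzero entries. -/
def Sparse {N : ℕ} (k : ℕ) (x : Fin N → ℝ) : Prop :=
  ∃ Γ : Finset (Fin N), Γ.card ≤ k ∧ ∀ i ∉ Γ, x i = 0

/-- `Φ` satisfies the Restricted Isometry Property with constant `δ ∈ (0,1)` for sparsity `k`. -/
def RIP {m N : ℕ} (Φ : Matrix (Fin m) (Fin N) ℝ) (k : ℕ) (δ : ℝ) : Prop :=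
  0 < δ ∧ δ < 1 ∧
    ∀ x : Fin N → ℝ, Sparse k x →
      (1 - δ) * l2 x ^ 2 ≤ l2 (Φ.mulVec x) ^ 2 ∧
      l2 (Φ.mulVec x) ^ 2 ≤ (1 + δ) * l2 x ^ 2

/-- The column submatrix `Φ_Γ` of `Φ` formed by the columns indexed by `Γ`. -/
def colSub {m N : ℕ} (Φ : Matrix (Fin m) (Fin N) ℝ) (Γ : Finset (Fin N)) :
    Matrix (Fin m) (↥Γ) ℝ := fun i j => Φ i j.1

-- extension
def extV {N : ℕ} (Γ : Finset (Fin N)) (u : ↥Γ → ℝ) : Fin N → ℝ :=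
  fun i => if h : i ∈ Γ then u ⟨i, h⟩ else 0

lemma l2_nonneg {ι : Type*} [Fintype ι] (x : ι → ℝ) : 0 ≤ l2 x := Real.sqrt_nonneg _

lemma l2_sq {ι : Type*} [Fintype ι] (x : ι → ℝ) : l2 x ^ 2 = ∑ i, x i ^ 2 := by
  apply Real.sq_sqrt
  exact Finset.sum_nonneg fun i _ => sq_nonneg _

lemma dot_self {ι : Type*} [Fintype ι] (x : ι → ℝ) : dot x x = l2 x ^ 2 := by
  rw [l2_sq]; unfold dot; simp [sq]

lemma sum_mul_extV {N : ℕ} (Γ : Finset (Fin N)) (u : ↥Γ → ℝ) (f : Fin N → ℝ) :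
    ∑ i, f i * extV Γ u i = ∑ j : ↥Γ, f j.1 * u j := by
  rw [← Finset.sum_subset Γ.subset_univ (fun i _ hi => by simp [extV, hi])]
  rw [← Finset.sum_attach Γ (fun i => f i * extV Γ u i)]
  apply Finset.sum_congr rfl
  intro j _
  simp [extV, j.2]

lemma extV_support {N : ℕ} (Γ : Finset (Fin N)) (u : ↥Γ → ℝ) :
    ∀ i ∉ Γ, extV Γ u i = 0 := fun i hi => dif_neg hi

lemma extV_coe {N : ℕ} (Γ : Finset (Fin N)) (u : ↥Γ → ℝ) (j : ↥Γ) :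
    extV Γ u j.1 = u j := by simp [extV, j.2]

lemma l2_extV {N : ℕ} (Γ : Finset (Fin N)) (u : ↥Γ → ℝ) : l2 (extV Γ u) = l2 u := by
  unfold l2; congr 1
  have h := sum_mul_extV Γ u (extV Γ u)
  simpa [extV_coe, sq] using h

lemma dot_extV {N : ℕ} (Γ : Finset (Fin N)) (u w : ↥Γ → ℝ) :
    dot (extV Γ u) (extV Γ w) = dot u w := by
  have h := sum_mul_extV Γ w (extV Γ u)
  simpa [dot, extV_coe] using h

lemma mulVec_extV {m N : ℕ} (Φ : Matrix (Fin m) (Fin N) ℝ) (Γ : Finset (Fin N))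
    (u : ↥Γ → ℝ) : Φ.mulVec (extV Γ u) = (colSub Φ Γ).mulVec u := by
  funext i
  simpa [Matrix.mulVec, dotProduct, colSub] using sum_mul_extV Γ u (fun j => Φ i j)

lemma dot_transpose_mulVec {m : ℕ} {ι : Type*} [Fintype ι]
    (A : Matrix (Fin m) ι ℝ) (w : ι → ℝ) (y : Fin m → ℝ) :
    dot w (Aᵀ.mulVec y) = dot (A.mulVec w) y := by
  unfold dot
  simp only [Matrix.mulVec, dotProduct, Matrix.transpose_apply, Finset.mul_sum,
    Finset.sum_mul]
  rw [Finset.sum_comm]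
  apply Finset.sum_congr rfl
  intro i _
  apply Finset.sum_congr rfl
  intro j _
  ring

lemma polar {ι : Type*} [Fintype ι] (p q : ι → ℝ) :
    l2 (p + q) ^ 2 - l2 (p - q) ^ 2 = 4 * dot p q := by
  simp only [l2_sq]
  unfold dot
  rw [← Finset.sum_sub_distrib, Finset.mul_sum]
  apply Finset.sum_congr rfl
  intro i _
  simp only [Pi.add_apply, Pi.sub_apply]
  ring

lemma l2_add_sq {ι : Type*} [Fintype ι] (p q : ι → ℝ) :
    l2 (p + q) ^ 2 = l2 p ^ 2 + 2 * dot p q + l2 q ^ 2 := by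
  simp only [l2_sq]
  unfold dot
  rw [Finset.mul_sum, ← Finset.sum_add_distrib, ← Finset.sum_add_distrib]
  apply Finset.sum_congr rfl
  intro i _
  simp only [Pi.add_apply]
  ring

lemma l2_sub_sq {ι : Type*} [Fintype ι] (p q : ι → ℝ) :
    l2 (p - q) ^ 2 = l2 p ^ 2 - 2 * dot p q + l2 q ^ 2 := by
  simp only [l2_sq]
  unfold dot
  rw [Finset.mul_sum]
  have : ∀ i ∈ Finset.univ, ((p - q) i) ^ 2 = p i ^ 2 - 2 * (p i * q i) + q i ^ 2 := by
    intro i _; simp only [Pi.sub_apply]; ring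
  rw [Finset.sum_congr rfl this]
  rw [Finset.sum_add_distrib, Finset.sum_sub_distrib]

lemma l2_eq_zero {ι : Type*} [Fintype ι] {x : ι → ℝ} (h : l2 x = 0) : x = 0 := by
  have h2 : ∑ i, x i ^ 2 = 0 := by rw [← l2_sq, h]; ring
  funext i
  have := (Finset.sum_eq_zero_iff_of_nonneg (fun i _ => sq_nonneg (x i))).1 h2 i
    (Finset.mem_univ i)
  exact pow_eq_zero_iff (by norm_num) |>.1 this

lemma smul_fun_l2_sq {ι : Type*} [Fintype ι] (c : ℝ) (x : ι → ℝ) :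
    l2 (fun i => c * x i) ^ 2 = c ^ 2 * l2 x ^ 2 := by
  simp only [l2_sq, Finset.mul_sum]
  apply Finset.sum_congr rfl
  intro i _; ring

lemma key {m N k : ℕ} (Φ : Matrix (Fin m) (Fin N) ℝ) (δ : ℝ) (hRIP : RIP Φ k δ)
    (Γ Γ' : Finset (Fin N)) (hdisj : Disjoint Γ Γ') (hcard : (Γ ∪ Γ').card ≤ k)
    (a b : Fin N → ℝ) (ha : ∀ i ∉ Γ, a i = 0) (hb : ∀ i ∉ Γ', b i = 0) :
    dot (Φ.mulVec a) (Φ.mulVec b) ≤ δ * (l2 a * l2 b) := by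
  obtain ⟨hδ, -, hr⟩ := hRIP
  -- step: half-sum bound for any supported pair
  have step : ∀ p q : Fin N → ℝ, (∀ i ∉ Γ, p i = 0) → (∀ i ∉ Γ', q i = 0) →
      dot (Φ.mulVec p) (Φ.mulVec q) ≤ δ * (l2 p ^ 2 + l2 q ^ 2) / 2 := by
    intro p q hp hq
    have hsupp : ∀ (c d : ℝ), Sparse k (fun i => c * p i + d * q i) := by
      intro c d
      refine ⟨Γ ∪ Γ', hcard, fun i hi => ?_⟩
      rw [Finset.mem_union] at hi
      push_neg at hi
      show c * p i + d * q i = 0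
      rw [hp i hi.1, hq i hi.2]; ring
    have hpq0 : dot p q = 0 := by
      apply Finset.sum_eq_zero
      intro i _
      by_cases h : i ∈ Γ
      · rw [hq i (Finset.disjoint_left.1 hdisj h)]; ring
      · rw [hp i h]; ring
    have hadd : Sparse k (p + q) := by
      have := hsupp 1 1; exact (by simpa using this : Sparse k (fun i => p i + q i))
    have hsub : Sparse k (p - q) := by
      have := hsupp 1 (-1)
      convert this using 1; funext i; simp; ring
    have h1 := (hr _ hadd).2
    have h2 := (hr _ hsub).1
    have hpolar : l2 (Φ.mulVec (p + q)) ^ 2 - l2 (Φ.mulVec (p - q)) ^ 2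
        = 4 * dot (Φ.mulVec p) (Φ.mulVec q) := by
      rw [Matrix.mulVec_add, Matrix.mulVec_sub, polar]
    have hA : l2 (p + q) ^ 2 = l2 p ^ 2 + l2 q ^ 2 := by
      rw [l2_add_sq, hpq0]; ring
    have hB : l2 (p - q) ^ 2 = l2 p ^ 2 + l2 q ^ 2 := by
      rw [l2_sub_sq, hpq0]; ring
    rw [hA] at h1; rw [hB] at h2
    nlinarith [h1, h2, hpolar]
  -- now scale
  set A := l2 a with hA
  set B := l2 b with hB
  by_cases hA0 : A = 0
  · have ha0 : a = 0 := l2_eq_zero hA0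
    rw [hA0, ha0]
    simp [dot, Matrix.mulVec_zero]
  by_cases hB0 : B = 0
  · have hb0 : b = 0 := l2_eq_zero hB0
    rw [hB0, hb0]
    simp [dot, Matrix.mulVec_zero]
  have hApos : 0 < A := lt_of_le_of_ne (l2_nonneg a) (Ne.symm hA0)
  have hBpos : 0 < B := lt_of_le_of_ne (l2_nonneg b) (Ne.symm hB0)
  have hstep := step (fun i => B * a i) (fun i => A * b i)
    (fun i hi => by show B * a i = 0; rw [ha i hi]; ring)
    (fun i hi => by show A * b i = 0; rw [hb i hi]; ring)
  have hme1 : Φ.mulVec (fun i => B * a i) = fun j => B * Φ.mulVec a j := by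
    funext j
    simp [Matrix.mulVec, dotProduct, Finset.mul_sum]
    apply Finset.sum_congr rfl; intro i _; ring
  have hme2 : Φ.mulVec (fun i => A * b i) = fun j => A * Φ.mulVec b j := by
    funext j
    simp [Matrix.mulVec, dotProduct, Finset.mul_sum]
    apply Finset.sum_congr rfl; intro i _; ring
  rw [hme1, hme2, smul_fun_l2_sq, smul_fun_l2_sq] at hstep
  have hdotscale : dot (fun j => B * Φ.mulVec a j) (fun j => A * Φ.mulVec b j)
      = B * A * dot (Φ.mulVec a) (Φ.mulVec b) := by
    unfold dot
    rw [Finset.mul_sum]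
    apply Finset.sum_congr rfl; intro j _; ring
  rw [hdotscale] at hstep
  rw [← hA, ← hB] at hstep
  nlinarith [mul_pos hApos hBpos, hstep]


/-- If `Φ` satisfies RIP with constant `δ` for sparsity `k`, `Γ` and `Γ'` are
disjoint with `|Γ ∪ Γ'| ≤ k`, and `u ∈ ℝ^Γ`, then `‖Φ_{Γ'}* Φ_Γ u‖₂ ≤ δ‖u‖₂`. -/
theorem stmt3 {m N : ℕ} (Φ : Matrix (Fin m) (Fin N) ℝ) (k : ℕ) (δ : ℝ)
    (hRIP : RIP Φ k δ) (Γ Γ' : Finset (Fin N)) (hdisj : Disjoint Γ Γ')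
    (hcard : (Γ ∪ Γ').card ≤ k) (u : ↥Γ → ℝ) :
    l2 ((colSub Φ Γ')ᵀ.mulVec ((colSub Φ Γ).mulVec u)) ≤ δ * l2 u := by
  set W := (colSub Φ Γ')ᵀ.mulVec ((colSub Φ Γ).mulVec u) with hW
  have hδ := hRIP.1
  have hkey : l2 W ^ 2 ≤ δ * (l2 W * l2 u) := by
    have h1 : l2 W ^ 2 = dot W W := (dot_self W).symm
    have h2 : dot W W = dot ((colSub Φ Γ').mulVec W) ((colSub Φ Γ).mulVec u) := by
      rw [hW, dot_transpose_mulVec]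
    have h3 : (colSub Φ Γ').mulVec W = Φ.mulVec (extV Γ' W) := (mulVec_extV Φ Γ' W).symm
    have h4 : (colSub Φ Γ).mulVec u = Φ.mulVec (extV Γ u) := (mulVec_extV Φ Γ u).symm
    have hcard' : (Γ' ∪ Γ).card ≤ k := by rwa [Finset.union_comm]
    have hk := key Φ δ hRIP Γ' Γ hdisj.symm hcard' (extV Γ' W) (extV Γ u)
      (extV_support Γ' W) (extV_support Γ u)
    rw [l2_extV, l2_extV] at hk
    calc l2 W ^ 2 = dot (Φ.mulVec (extV Γ' W)) (Φ.mulVec (extV Γ u)) := by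
          rw [h1, h2, h3, h4]
      _ ≤ δ * (l2 W * l2 u) := hk
  by_cases h0 : l2 W = 0
  · rw [h0]
    exact mul_nonneg hδ.le (l2_nonneg u)
  have hWpos : 0 < l2 W := lt_of_le_of_ne (l2_nonneg W) (Ne.symm h0)
  nlinarith [hkey, hWpos, l2_nonneg u]
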